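/- arXiv:2502.14690 — 3 statements merged into one kernel-verified Lean document; each statement's English description precedes it below -/
import Mathlib

section
/- For every RRC market and every linear order σ of the students, the serial dictatorship matching SD(σ) is feasible, individually rational, non-wasteful, and Pareto-efficient for students. -/
namespace RRC

section Defs

variable (S C R : Type)

/-- A matching market with resource-regional caps (RRC).  Students `S`, colleges `C`,
non-empty resources `R`; the empty resource `r0` is represented by `none : Option R`. -/
structure Market where
  /-- quota of each college -/
  qC : C → ℕ
  qC_pos : ∀ c, 0 < qC c
  /-- quota of each non-empty resource -/
  qR : R → ℕ
  qR_pos : ∀ r, 0 < qR r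
  /-- region of each non-empty resource (the region of `r0` is all of `C`) -/
  region : R → Finset C
  region_nonempty : ∀ r, (region r).Nonempty
  /-- strict priority order of each college over students -/
  prC : C → S → S → Prop
  prC_sto : ∀ c, IsStrictTotalOrder S (prC c)
  /-- strict preference order of each student over `(C × R0) ∪ {∅}`;
  `none` is the outside option `∅` -/
  prS : S → Option (C × Option R) → Option (C × Option R) → Prop
  prS_sto : ∀ s, IsStrictTotalOrder (Option (C × Option R)) (prS s)

/-- A matching: each student appears in at most one contract, so a matching is a
function from students to optional (college, resource) pairs. -/
abbrev Matching := S → Option (C × Option R)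

variable {S C R} [DecidableEq S]

/-- Number of contracts of the college `c` in `μ`. -/
noncomputable def collegeCount (μ : Matching S C R) (c : C) : ℕ :=
  {s : S | ∃ r, μ s = some (c, r)}.ncard

/-- Number of contracts containing the non-empty resource `r` in `μ`. -/
noncomputable def resourceCount (μ : Matching S C R) (r : R) : ℕ :=
  {s : S | ∃ c, μ s = some (c, some r)}.ncard

/-- Feasibility: college quotas, resource quotas, and regions are respected. -/
def Feasible (M : Market S C R) (μ : Matching S C R) : Prop :=
  (∀ c, collegeCount μ c ≤ M.qC c) ∧
  (∀ r, resourceCount μ r ≤ M.qR r) ∧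
  (∀ s c r, μ s = some (c, some r) → c ∈ M.region r)

/-- A pair `(c, r)` is acceptable for `s` if `s` prefers it to being unmatched. -/
def Acceptable (M : Market S C R) (s : S) (c : C) (r : Option R) : Prop :=
  M.prS s (some (c, r)) none

/-- Individual rationality: no unacceptable contract is used. -/
def IndRational (M : Market S C R) (μ : Matching S C R) : Prop :=
  ∀ s x, μ s = some x → M.prS s (some x) none

/-- The contract `(s, c, r) ∉ μ` envy-blocks `μ` through `(s', c, r') ∈ μ`. -/
def EnvyBlocksThrough (M : Market S C R) (μ : Matching S C R)
    (s : S) (c : C) (r : Option R) (s' : S) (r' : Option R) : Prop :=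
  μ s ≠ some (c, r) ∧ μ s' = some (c, r') ∧
  M.prS s (some (c, r)) (μ s) ∧ M.prC c s s' ∧
  Feasible M (Function.update (Function.update μ s' none) s (some (c, r)))

def EnvyBlocks (M : Market S C R) (μ : Matching S C R)
    (s : S) (c : C) (r : Option R) : Prop :=
  ∃ s' r', EnvyBlocksThrough M μ s c r s' r'

def EnvyFree (M : Market S C R) (μ : Matching S C R) : Prop :=
  ∀ s c r, ¬ EnvyBlocks M μ s c r

/-- The contract `(s, c, r) ∉ μ` waste-blocks `μ`. -/
def WasteBlocks (M : Market S C R) (μ : Matching S C R)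
    (s : S) (c : C) (r : Option R) : Prop :=
  μ s ≠ some (c, r) ∧ M.prS s (some (c, r)) (μ s) ∧
  Feasible M (Function.update μ s (some (c, r)))

def NonWasteful (M : Market S C R) (μ : Matching S C R) : Prop :=
  ∀ s c r, ¬ WasteBlocks M μ s c r

/-- Stability: feasible, individually rational, no envy-blocking and no
waste-blocking contract. -/
def Stable (M : Market S C R) (μ : Matching S C R) : Prop :=
  Feasible M μ ∧ IndRational M μ ∧ EnvyFree M μ ∧ NonWasteful M μ

/-- `(s, c, r)` direct-envy-blocks `μ`: it envy-blocks through some `(s', c, r')`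
with `r ∈ {r', r0}`. -/
def DirectEnvyBlocks (M : Market S C R) (μ : Matching S C R)
    (s : S) (c : C) (r : Option R) : Prop :=
  ∃ s' r', EnvyBlocksThrough M μ s c r s' r' ∧ (r = r' ∨ r = none)

/-- The waste-blocking contract `(s, c, r)` is dominated by `(s', c, r') ∉ μ`. -/
def Dominates (M : Market S C R) (μ : Matching S C R)
    (s : S) (c : C) (r : Option R) (s' : S) (r' : Option R) : Prop :=
  μ s' ≠ some (c, r') ∧
  ¬ WasteBlocks M μ s' c r' ∧ ¬ DirectEnvyBlocks M μ s' c r' ∧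
  DirectEnvyBlocks M (Function.update μ s (some (c, r))) s' c r'

/-- Direct-envy stability: feasible, individually rational, no direct-envy-blocking
contract, and every waste-blocking contract is dominated. -/
def DirectEnvyStable (M : Market S C R) (μ : Matching S C R) : Prop :=
  Feasible M μ ∧ IndRational M μ ∧
  (∀ s c r, ¬ DirectEnvyBlocks M μ s c r) ∧
  (∀ s c r, WasteBlocks M μ s c r → ∃ s' r', Dominates M μ s c r s' r')

/-- Weak stability: no direct-envy-blocking contract, and every waste-blocking
contract involves a non-empty resource whose quota is fully used. -/
def WeaklyStable (M : Market S C R) (μ : Matching S C R) : Prop :=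
  Feasible M μ ∧ IndRational M μ ∧
  (∀ s c r, ¬ DirectEnvyBlocks M μ s c r) ∧
  (∀ s c (r : Option R), WasteBlocks M μ s c r →
    ∃ r₁, r = some r₁ ∧ resourceCount μ r₁ = M.qR r₁)

/-- A waste-blocking contract is resource-blocking if the student is already
admitted to the same college. -/
def ResourceBlocks (M : Market S C R) (μ : Matching S C R)
    (s : S) (c : C) (r : Option R) : Prop :=
  WasteBlocks M μ s c r ∧ ∃ r', μ s = some (c, r')

/-- A waste-blocking contract is seat-blocking if the student is not admitted to
the same college. -/
def SeatBlocks (M : Market S C R) (μ : Matching S C R)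
    (s : S) (c : C) (r : Option R) : Prop :=
  WasteBlocks M μ s c r ∧ ¬ ∃ r', μ s = some (c, r')

def ResourceEfficient (M : Market S C R) (μ : Matching S C R) : Prop :=
  ∀ s c r, ¬ ResourceBlocks M μ s c r

def SeatEfficient (M : Market S C R) (μ : Matching S C R) : Prop :=
  ∀ s c r, ¬ SeatBlocks M μ s c r

end Defs

section Cutoffs

variable {S C R : Type} [Fintype S]

/-- A cutoff profile: one cutoff per (college, resource) pair, bounded by the
number of students, with the cutoff for the empty resource the largest. -/
def IsCutoffProfile (St : Type) [Fintype St] {Co Re : Type}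
    (K : Co → Option Re → ℕ) : Prop :=
  (∀ c r, K c r ≤ Fintype.card St) ∧ ∀ c (r : Re), K c (some r) ≤ K c none

/-- Rank of student `s` in the priority order of college `c` (0 = best). -/
noncomputable def studentRank (M : Market S C R) (c : C) (s : S) : ℕ :=
  {s' : S | M.prC c s' s}.ncard

/-- `(s, c, r)` is permitted by the cutoff profile `K` if `s` is among the top
`K c r` students of `c`'s priority order. -/
noncomputable def Permitted (M : Market S C R) (K : C → Option R → ℕ)
    (s : S) (c : C) (r : Option R) : Prop :=
  studentRank M c s < K c r

/-- `μ` is the matching induced by the cutoff profile `K`: every student gets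
their most preferred acceptable permitted contract, if any. -/
def IsInduced (M : Market S C R) (K : C → Option R → ℕ) (μ : Matching S C R) : Prop :=
  ∀ s : S,
    (∀ c r, μ s = some (c, r) →
      Permitted M K s c r ∧ Acceptable M s c r ∧
      ∀ c' r', Permitted M K s c' r' → Acceptable M s c' r' →
        (c', r') ≠ (c, r) → M.prS s (some (c, r)) (some (c', r'))) ∧
    (μ s = none → ∀ c r, ¬ (Permitted M K s c r ∧ Acceptable M s c r))

/-- `K + 1_r^c`: increase the cutoff of `(c, r)` by one (simultaneously increasing
the cutoff of `(c, r0)` if it was equal to that of `(c, r)`). -/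
def bump [DecidableEq C] [DecidableEq R] (K : C → Option R → ℕ)
    (c : C) (r : Option R) : C → Option R → ℕ :=
  fun c' r' =>
    if c' = c ∧ (r' = r ∨ (r' = none ∧ r ≠ none ∧ K c none = K c r)) then K c' r' + 1
    else K c' r'

/-- An optimal cutoff profile: the induced matching is feasible, and increasing any
non-maximal cutoff yields an infeasible induced matching. -/
def OptimalCutoffs [DecidableEq C] [DecidableEq R]
    (M : Market S C R) (K : C → Option R → ℕ) : Prop :=
  IsCutoffProfile S K ∧
  (∀ μ, IsInduced M K μ → Feasible M μ) ∧
  ∀ c r, K c r < Fintype.card S →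
    ∀ μ', IsInduced M (bump K c r) μ' → ¬ Feasible M μ'

end Cutoffs

section SD

variable {S C R : Type} [DecidableEq S]

/-- `x` is the most preferred contract of the (unmatched) student `s` given the
current matching `μ`: the best acceptable contract keeping the matching feasible,
or `none` if there is no such contract. -/
def BestChoice (M : Market S C R) (μ : Matching S C R) (s : S)
    (x : Option (C × Option R)) : Prop :=
  match x with
  | some (c, r) =>
      Acceptable M s c r ∧ Feasible M (Function.update μ s (some (c, r))) ∧
      ∀ c' r', Acceptable M s c' r' → Feasible M (Function.update μ s (some (c', r'))) →
        (c', r') = (c, r) ∨ M.prS s (some (c, r)) (some (c', r'))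
  | none => ∀ c r, ¬ (Acceptable M s c r ∧ Feasible M (Function.update μ s (some (c, r))))

/-- A run of the serial dictatorship mechanism on a list of students:
`SDRun M l μ μ'` holds if starting from `μ` and processing the students of `l`
in order, each one receiving their most preferred feasible acceptable contract,
yields `μ'`. -/
inductive SDRun (M : Market S C R) : List S → Matching S C R → Matching S C R → Prop
  | nil (μ : Matching S C R) : SDRun M [] μ μ
  | cons (s : S) (l : List S) (μ : Matching S C R) (x : Option (C × Option R))
      (μ' : Matching S C R) (hx : BestChoice M μ s x)
      (h : SDRun M l (Function.update μ s x) μ') : SDRun M (s :: l) μ μ'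

/-- Student `s` weakly prefers `x` to `y`. -/
def WeaklyPrefers (M : Market S C R) (s : S) (x y : Option (C × Option R)) : Prop :=
  x = y ∨ M.prS s x y

/-- Pareto efficiency for students. -/
def ParetoEfficient (M : Market S C R) (μ : Matching S C R) : Prop :=
  ¬ ∃ μ' : Matching S C R, Feasible M μ' ∧
    (∀ s, WeaklyPrefers M s (μ' s) (μ s)) ∧ ∃ s, M.prS s (μ' s) (μ s)

end SD

/-- A strict total order induced by an injective rank function (rank 0 = best). -/
lemma isStrictTotalOrder_of_rank {α : Type*} (f : α → ℕ) (hf : Function.Injective f) :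
    IsStrictTotalOrder α (fun x y => f x < f y) where
  trichotomous a b := by
    intro h1 h2
    exact hf (le_antisymm (not_lt.mp h2) (not_lt.mp h1))
  irrefl a := lt_irrefl (f a)
  trans a b c h1 h2 := lt_trans h1 h2

end RRC

namespace RRC

section Aux

variable {S C R : Type} [DecidableEq S]

lemma prS_asymm {M : Market S C R} (s : S) {x y} (h1 : M.prS s x y) (h2 : M.prS s y x) :
    False := by
  haveI := M.prS_sto s
  exact irrefl_of (M.prS s) x (trans_of (M.prS s) h1 h2)

lemma sdrun_eq_of_not_mem {M : Market S C R} {l : List S} {ν μ : Matching S C R}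
    (h : SDRun M l ν μ) : ∀ t ∉ l, μ t = ν t := by
  induction h with
  | nil μ => intro t _; rfl
  | cons s l ν x μ' hx h ih =>
      intro t ht
      simp only [List.mem_cons, not_or] at ht
      rw [ih t ht.2, Function.update_of_ne ht.1]

lemma feas_mono [Fintype S] {M : Market S C R} {μ ν : Matching S C R}
    (hsub : ∀ t, ν t = μ t ∨ ν t = none) (hf : Feasible M μ) : Feasible M ν := by
  obtain ⟨h1, h2, h3⟩ := hf
  refine ⟨fun c => le_trans (Set.ncard_le_ncard ?_ (Set.toFinite _)) (h1 c),
          fun r => le_trans (Set.ncard_le_ncard ?_ (Set.toFinite _)) (h2 r),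
          fun s c r hs => h3 s c r ?_⟩
  · intro s hs
    obtain ⟨r, hr⟩ := hs
    rcases hsub s with h | h
    · exact ⟨r, by rw [← h]; exact hr⟩
    · rw [h] at hr; exact absurd hr (by simp)
  · intro s hs
    obtain ⟨c, hc⟩ := hs
    rcases hsub s with h | h
    · exact ⟨c, by rw [← h]; exact hc⟩
    · rw [h] at hc; exact absurd hc (by simp)
  · rcases hsub s with h | h
    · rw [← h]; exact hs
    · rw [h] at hs; exact absurd hs (by simp)

lemma feas_empty {M : Market S C R} :
    Feasible M (fun _ : S => (none : Option (C × Option R))) := by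
  refine ⟨fun c => ?_, fun r => ?_, fun s c r h => by simp at h⟩
  · rw [collegeCount]
    have : {s : S | ∃ r, (none : Option (C × Option R)) = some (c, r)} = ∅ := by
      ext s; simp
    rw [this, Set.ncard_empty]
    exact Nat.zero_le _
  · have : {s : S | ∃ c, (none : Option (C × Option R)) = some (c, some r)} = ∅ := by
      ext s; simp
    rw [resourceCount, this, Set.ncard_empty]
    exact Nat.zero_le _

lemma sdrun_feas_ir [Fintype S] {M : Market S C R} {l : List S} {ν μ : Matching S C R}
    (h : SDRun M l ν μ) (hf : Feasible M ν) (hir : IndRational M ν) :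
    Feasible M μ ∧ IndRational M μ := by
  induction h with
  | nil μ => exact ⟨hf, hir⟩
  | cons s l ν x μ' hx h ih =>
      refine ih ?_ ?_
      · match x, hx with
        | some (c, r), hx => exact hx.2.1
        | none, hx =>
            refine feas_mono (fun t => ?_) hf
            by_cases hts : t = s
            · subst hts; simp
            · rw [Function.update_of_ne hts]; exact Or.inl rfl
      · intro t y hy
        by_cases hts : t = s
        · subst hts
          rw [Function.update_self] at hy
          match x, hx, hy with
          | some (c, r), hx, hy =>
              cases hy
              exact hx.1
        · rw [Function.update_of_ne hts] at hy
          exact hir t y hy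

lemma sdrun_drop {M : Market S C R} :
    ∀ (l₁ : List S) {l₂ : List S} {ν μ : Matching S C R}, SDRun M (l₁ ++ l₂) ν μ →
      ∃ ν', SDRun M l₂ ν' μ ∧ ∀ t ∉ l₁, ν' t = ν t := by
  intro l₁
  induction l₁ with
  | nil => intro l₂ ν μ h; exact ⟨ν, h, fun t _ => rfl⟩
  | cons a l₁ ih =>
      intro l₂ ν μ h
      cases h with
      | cons _ _ _ x _ hx h =>
          obtain ⟨ν', hrun, heq⟩ := ih h
          refine ⟨ν', hrun, fun t ht => ?_⟩
          simp only [List.mem_cons, not_or] at ht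
          rw [heq t ht.2, Function.update_of_ne ht.1]

lemma sdrun_step [Fintype S] {M : Market S C R} {l₁ l₂ : List S} {s : S} {μ : Matching S C R}
    (h : SDRun M (l₁ ++ s :: l₂) (fun _ => none) μ) (hnd : (l₁ ++ s :: l₂).Nodup) :
    ∃ ν' : Matching S C R, BestChoice M ν' s (μ s) ∧ (∀ t ∈ s :: l₂, ν' t = none) ∧
      (∀ t, ν' t = μ t ∨ ν' t = none) := by
  obtain ⟨nd₁, nd₂, hdisj⟩ := List.nodup_append'.mp hnd
  obtain ⟨ν', hrun, heq⟩ := sdrun_drop l₁ h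
  have hnone : ∀ t ∈ s :: l₂, ν' t = none := by
    intro t ht
    exact heq t fun hmem => hdisj hmem ht
  have hsub : ∀ t, ν' t = μ t ∨ ν' t = none := by
    intro t
    by_cases ht : t ∈ s :: l₂
    · exact Or.inr (hnone t ht)
    · exact Or.inl (sdrun_eq_of_not_mem hrun t ht).symm
  cases hrun with
  | cons _ _ _ x _ hx hrun' =>
      have hs : s ∉ l₂ := (List.nodup_cons.mp nd₂).1
      have hμs : μ s = x := by
        rw [sdrun_eq_of_not_mem hrun' s hs, Function.update_self]
      exact ⟨ν', hμs ▸ hx, hnone, hsub⟩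

lemma acceptable_of_pref {M : Market S C R} {μ : Matching S C R} {s : S} {c : C}
    {r : Option R} (hir : IndRational M μ) (hpref : M.prS s (some (c, r)) (μ s)) :
    M.prS s (some (c, r)) none := by
  cases hμ : μ s with
  | none => rw [hμ] at hpref; exact hpref
  | some y =>
      haveI := M.prS_sto s
      rw [hμ] at hpref
      exact trans_of (M.prS s) hpref (hir s y hμ)

/-- The key optimality contradiction: at `s`'s turn no strictly better contract
that would keep things feasible can exist. -/
lemma bestChoice_contradiction {M : Market S C R} {ν' : Matching S C R} {s : S}
    {c : C} {r : Option R} {y : Option (C × Option R)}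
    (hbc : BestChoice M ν' s y)
    (hne : y ≠ some (c, r))
    (hacc : M.prS s (some (c, r)) none)
    (hpref : M.prS s (some (c, r)) y)
    (hfeas : Feasible M (Function.update ν' s (some (c, r)))) : False := by
  match y, hbc with
  | none, hbc => exact hbc c r ⟨hacc, hfeas⟩
  | some (c₀, r₀), hbc =>
      rcases hbc.2.2 c r hacc hfeas with heq | hlt
      · exact hne (by rw [heq])
      · exact prS_asymm s hpref hlt

end Aux

end RRC

namespace RRC

/-- For every RRC market and every linear order of the students,
the serial dictatorship matching is feasible, individually rational, non-wasteful,
and Pareto-efficient for students. -/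
theorem serialDictatorship_properties
    {S C R : Type} [Fintype S] [DecidableEq S] [Fintype C] [DecidableEq C]
    [Fintype R] [DecidableEq R]
    (M : Market S C R) (l : List S) (hnd : l.Nodup) (hall : ∀ s, s ∈ l)
    (μ : Matching S C R) (h : SDRun M l (fun _ => none) μ) :
    Feasible M μ ∧ IndRational M μ ∧ NonWasteful M μ ∧ ParetoEfficient M μ := by
  obtain ⟨hfeas, hir⟩ := sdrun_feas_ir h feas_empty (fun s x hx => by cases hx)
  refine ⟨hfeas, hir, ?_, ?_⟩
  · -- NonWasteful
    rintro s c r ⟨hne, hpref, hfw⟩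
    obtain ⟨l₁, l₂, rfl⟩ := List.append_of_mem (hall s)
    obtain ⟨ν', hbc, hnone, hsub⟩ := sdrun_step h hnd
    have hacc := acceptable_of_pref hir hpref
    have hfeas' : Feasible M (Function.update ν' s (some (c, r))) := by
      refine feas_mono (μ := Function.update μ s (some (c, r))) (fun t => ?_) hfw
      by_cases hts : t = s
      · subst hts; simp
      · rw [Function.update_of_ne hts, Function.update_of_ne hts]
        exact hsub t
    exact bestChoice_contradiction hbc hne hacc hpref hfeas'
  · -- ParetoEfficient
    rintro ⟨μ', hfeas', hweak, s₀, hstrict⟩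
    have claim : ∀ l₂ l₁, l₁ ++ l₂ = l → (∀ t ∈ l₁, μ' t = μ t) →
        ∀ t ∈ l₂, μ' t = μ t := by
      intro l₂
      induction l₂ with
      | nil => intro l₁ _ _ t ht; simp at ht
      | cons a l₂ ih =>
          intro l₁ hl hpre t ht
          have ha : μ' a = μ a := by
            rcases hweak a with hh | hstr
            · exact hh
            · exfalso
              subst hl
              obtain ⟨ν', hbc, hnone, hsub⟩ := sdrun_step h hnd
              cases hμ'a : μ' a with
              | none =>
                  rw [hμ'a] at hstr
                  cases hμa : μ a with
                  | none =>
                      rw [hμa] at hstr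
                      haveI := M.prS_sto a
                      exact irrefl_of (M.prS a) none hstr
                  | some y =>
                      rw [hμa] at hstr
                      exact prS_asymm a hstr (hir a y hμa)
              | some cr =>
                  obtain ⟨c, r⟩ := cr
                  rw [hμ'a] at hstr
                  have hacc := acceptable_of_pref hir hstr
                  have hfeas'' : Feasible M (Function.update ν' a (some (c, r))) := by
                    refine feas_mono (μ := μ') (fun t => ?_) hfeas'
                    by_cases hts : t = a
                    · subst hts
                      rw [Function.update_self, hμ'a]
                      exact Or.inl rfl
                    · rw [Function.update_of_ne hts]
                      by_cases htl : t ∈ a :: l₂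
                      · exact Or.inr (hnone t htl)
                      · have htl₁ : t ∈ l₁ := by
                          have := hall t
                          rw [List.mem_append] at this
                          tauto
                        rcases hsub t with hh | hh
                        · exact Or.inl (by rw [hh, ← hpre t htl₁])
                        · exact Or.inr hh
                  have hμane : μ a ≠ some (c, r) := by
                    intro hh
                    rw [hh] at hstr
                    haveI := M.prS_sto a
                    exact irrefl_of (M.prS a) _ hstr
                  exact bestChoice_contradiction hbc hμane hacc hstr hfeas''
          rcases List.mem_cons.mp ht with rfl | ht'
          · exact ha
          · refine ih (l₁ ++ [a]) (by simpa using hl) ?_ t ht'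
            intro u hu
            rcases List.mem_append.mp hu with h1 | h2
            · exact hpre u h1
            · rw [List.mem_singleton] at h2
              subst h2
              exact ha
    have := claim l [] rfl (by simp) s₀ (hall s₀)
    rw [this] at hstrict
    haveI := M.prS_sto s₀
    exact irrefl_of (M.prS s₀) _ hstrict


end RRC
end

section
/- In an RRC market with no non-empty resources (R = ∅, so the only resource is r0), a feasible individually rational matching is direct-envy stable if and only if it is stable. -/
namespace RRC

section Aux

variable {S C R : Type} [Fintype S] [DecidableEq S]

lemma optR_eq_none (hR : IsEmpty R) (r : Option R) : r = none := by
  cases r with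
  | none => rfl
  | some a => exact (hR.false a).elim

lemma collegeCount_update_add (μ : Matching S C R) (s : S) (c : C) (r0 : Option R)
    (hs : ∀ r, μ s ≠ some (c, r)) :
    collegeCount (Function.update μ s (some (c, r0))) c = collegeCount μ c + 1 := by
  have hset : {t : S | ∃ r, Function.update μ s (some (c, r0)) t = some (c, r)}
      = insert s {t : S | ∃ r, μ t = some (c, r)} := by
    ext t
    by_cases ht : t = s
    · subst ht
      constructor
      · intro _; exact Set.mem_insert _ _
      · intro _; exact ⟨r0, by rw [Function.update_self]⟩
    · simp only [Function.update_of_ne ht, Set.mem_setOf_eq, Set.mem_insert_iff, ht,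
        false_or]
  rw [collegeCount, collegeCount, hset,
    Set.ncard_insert_of_notMem (by simpa using hs) (Set.toFinite _)]

lemma collegeCount_update_le (μ : Matching S C R) (s : S) (c c' : C) (r0 : Option R)
    (hcc : c ≠ c') :
    collegeCount (Function.update μ s (some (c, r0))) c' ≤ collegeCount μ c' := by
  apply Set.ncard_le_ncard _ (Set.toFinite _)
  intro t ht
  obtain ⟨r, hr⟩ := ht
  by_cases hts : t = s
  · subst hts
    rw [Function.update_self] at hr
    exact absurd (congrArg (fun x => Option.map Prod.fst x) hr) (by simpa using hcc)
  · rw [Function.update_of_ne hts] at hr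
    exact ⟨r, hr⟩

end Aux

/-- In an RRC market with no non-empty resources, a feasible
individually rational matching is direct-envy stable if and only if it is stable. -/
theorem directEnvyStable_iff_stable_of_no_resources
    {S C R : Type} [Fintype S] [DecidableEq S] [Fintype C] [DecidableEq C]
    [Fintype R] [DecidableEq R] (hR : IsEmpty R)
    (M : Market S C R) (μ : Matching S C R)
    (hfeas : Feasible M μ) (hir : IndRational M μ) :
    DirectEnvyStable M μ ↔ Stable M μ := by
  constructor
  · rintro ⟨_, _, hdes, hdom⟩
    refine ⟨hfeas, hir, ?_, ?_⟩
    · -- envy-free: any envy block has r = none, hence is direct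
      intro s c r heb
      obtain ⟨s', r', hebt⟩ := heb
      have hrn : r = none := optR_eq_none hR r
      exact hdes s c r ⟨s', r', hebt, Or.inr hrn⟩
    · -- non-wasteful
      intro s c r hwb
      have hrn : r = none := optR_eq_none hR r
      subst hrn
      obtain ⟨s', r', hD⟩ := hdom s c none hwb
      have hr'n : r' = none := optR_eq_none hR r'
      subst hr'n
      obtain ⟨hne0, hnwb, hndeb, hdeb1⟩ := hD
      obtain ⟨s'', r'', hebt, _⟩ := hdeb1
      obtain ⟨hne1, hm1, hpr1, hprC1, hfeas1⟩ := hebt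
      -- s' ≠ s
      have hss : s' ≠ s := by
        intro h
        subst h
        rw [Function.update_self] at hne1
        exact hne1 rfl
      have hupd : Function.update μ s (some (c, none)) s' = μ s' :=
        Function.update_of_ne hss _ _
      rw [hupd] at hne1 hpr1
      -- build a waste block (s', c, none) of μ, contradiction
      apply hnwb
      refine ⟨hne1, hpr1, ?_, ?_, ?_⟩
      · -- college counts
        intro c''
        by_cases hc : c'' = c
        · subst hc
          have hsnot : ∀ r, μ s ≠ some (c'', r) := by
            intro r h
            rw [optR_eq_none hR r] at h
            exact hwb.1 h
          have hs'not : ∀ r, μ s' ≠ some (c'', r) := by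
            intro r h
            rw [optR_eq_none hR r] at h
            exact hne1 h
          have h1 := hwb.2.2.1 c''
          rw [collegeCount_update_add μ s c'' none hsnot] at h1
          rw [collegeCount_update_add μ s' c'' none hs'not]
          exact h1
        · calc collegeCount (Function.update μ s' (some (c, none))) c''
              ≤ collegeCount μ c'' := collegeCount_update_le μ s' c c'' none (Ne.symm hc)
            _ ≤ M.qC c'' := hfeas.1 c''
      · intro r; exact (hR.false r).elim
      · intro _ _ r; exact (hR.false r).elim
  · rintro ⟨_, _, hef, hnw⟩
    refine ⟨hfeas, hir, ?_, ?_⟩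
    · rintro s c r ⟨s', r', hebt, _⟩
      exact hef s c r ⟨s', r', hebt⟩
    · intro s c r hwb
      exact absurd hwb (hnw s c r)

end RRC
end

section
/- In an RRC market in which all colleges share the same priority order over students, i.e., ≻_c = ≻ for every college c, let σ be the linear order of students given by ≻ (the ≻-best student first). Then the serial dictatorship matching SD(σ) is a stable matching. -/
namespace RRC

section Aux

variable {S C R : Type} [DecidableEq S]

/-- `ν` is a submatching of `ν'`. -/
def Sub (ν ν' : Matching S C R) : Prop := ∀ t, ν t = ν' t ∨ ν t = none

lemma sub_feasible [Fintype S] {M : Market S C R} {ν ν' : Matching S C R}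
    (hsub : Sub ν ν') (hfe : Feasible M ν') : Feasible M ν := by
  obtain ⟨h1, h2, h3⟩ := hfe
  refine ⟨fun c => le_trans ?_ (h1 c), fun r => le_trans ?_ (h2 r), fun s c r hs => ?_⟩
  · refine Set.ncard_le_ncard ?_ (Set.toFinite _)
    rintro s ⟨r, hr⟩
    rcases hsub s with hh | hh
    · exact ⟨r, hh ▸ hr⟩
    · rw [hh] at hr; exact absurd hr (by simp)
  · refine Set.ncard_le_ncard ?_ (Set.toFinite _)
    rintro s ⟨c, hc⟩
    rcases hsub s with hh | hh
    · exact ⟨c, hh ▸ hc⟩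
    · rw [hh] at hc; exact absurd hc (by simp)
  · rcases hsub s with hh | hh
    · exact h3 s c r (hh ▸ hs)
    · rw [hh] at hs; exact absurd hs (by simp)

lemma sdrun_unchanged {M : Market S C R} {l : List S} {μ0 μ : Matching S C R}
    (h : SDRun M l μ0 μ) : ∀ t ∉ l, μ t = μ0 t := by
  induction h with
  | nil => intro t _; rfl
  | cons s l μ0 x μ' hx hrun ih =>
      intro t ht
      have hts : t ≠ s := fun hh => ht (hh ▸ List.mem_cons_self (a := s) (l := l))
      have htl : t ∉ l := fun hh => ht (List.mem_cons_of_mem _ hh)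
      rw [ih t htl, Function.update_of_ne hts]

lemma sdrun_feasible [Fintype S] {M : Market S C R} {l : List S} {μ0 μ : Matching S C R}
    (h : SDRun M l μ0 μ) (h0 : Feasible M μ0) : Feasible M μ := by
  induction h with
  | nil => exact h0
  | cons s l μ0 x μ' hx hrun ih =>
      apply ih
      match x, hx with
      | some (c, r), hx => exact hx.2.1
      | none, hx =>
          refine sub_feasible (ν' := μ0) ?_ h0
          intro t
          by_cases hts : t = s
          · subst hts; right; simp
          · left; rw [Function.update_of_ne hts]

lemma sdrun_split {M : Market S C R} :
    ∀ (l1 : List S) (s : S) (l2 : List S) (μ0 μ : Matching S C R),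
      SDRun M (l1 ++ s :: l2) μ0 μ →
      ∃ μt x, SDRun M l1 μ0 μt ∧ BestChoice M μt s x ∧
        SDRun M l2 (Function.update μt s x) μ := by
  intro l1
  induction l1 with
  | nil =>
      intro s l2 μ0 μ h
      cases h with
      | cons _ _ _ x _ hx hrun => exact ⟨μ0, x, SDRun.nil μ0, hx, hrun⟩
  | cons a l1 ih =>
      intro s l2 μ0 μ h
      cases h with
      | cons _ _ _ x0 _ hx0 hrun =>
          obtain ⟨μt, x, h1, h2, h3⟩ := ih s l2 _ μ hrun
          exact ⟨μt, x, SDRun.cons a l1 μ0 x0 μt hx0 h1, h2, h3⟩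

/-- The state of the serial dictatorship at the turn of student `s`. -/
lemma sdrun_turn {M : Market S C R} {pr : S → S → Prop}
    (hasym : ∀ a b, pr a b → pr b a → False)
    {l : List S} (hnd : l.Nodup) (hsorted : l.Pairwise pr)
    {μ0 μ : Matching S C R} (h : SDRun M l μ0 μ) {s : S} (hs : s ∈ l) :
    ∃ μt : Matching S C R, BestChoice M μt s (μ s) ∧
      (∀ t, μt t = μ t ∨ μt t = μ0 t) ∧ μt s = μ0 s ∧
      (∀ t, pr s t → t ∈ l → μt t = μ0 t) := by
  obtain ⟨l1, l2, rfl⟩ := List.append_of_mem hs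
  obtain ⟨μt, x, h1, h2, h3⟩ := sdrun_split l1 s l2 μ0 μ h
  have hnd' := hnd
  rw [List.nodup_append] at hnd'
  obtain ⟨hnd1, hnd2, hdisj⟩ := hnd'
  have hs1 : s ∉ l1 := fun hh => hdisj s hh s List.mem_cons_self rfl
  have hs2 : s ∉ l2 := by
    have := List.Nodup.notMem (hnd2)
    simpa using this
  have hμs : μ s = x := by
    rw [sdrun_unchanged h3 s hs2, Function.update_self]
  refine ⟨μt, hμs ▸ h2, ?_, sdrun_unchanged h1 s hs1, ?_⟩
  · intro t
    by_cases ht1 : t ∈ l1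
    · left
      have ht2 : t ∉ l2 := fun hh => hdisj t ht1 t (List.mem_cons_of_mem _ hh) rfl
      have hts : t ≠ s := fun hh => hs1 (hh ▸ ht1)
      rw [sdrun_unchanged h3 t ht2, Function.update_of_ne hts]
    · right; exact sdrun_unchanged h1 t ht1
  · intro t hprt htl
    have ht1 : t ∉ l1 := by
      intro hh
      rw [List.pairwise_append] at hsorted
      exact hasym s t hprt (hsorted.2.2 t hh s List.mem_cons_self)
    exact sdrun_unchanged h1 t ht1

end Aux

/-- If all colleges share the same priority order `pr` over students
and the students are processed in the order given by `pr` (best student first), then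
the serial dictatorship matching is stable. -/
theorem serialDictatorship_stable_of_aligned_colleges
    {S C R : Type} [Fintype S] [DecidableEq S] [Fintype C] [DecidableEq C]
    [Fintype R] [DecidableEq R]
    (M : Market S C R) (pr : S → S → Prop) (haligned : ∀ c, M.prC c = pr)
    (l : List S) (hnd : l.Nodup) (hall : ∀ s, s ∈ l) (hsorted : l.Pairwise pr)
    (μ : Matching S C R) (h : SDRun M l (fun _ => none) μ) :
    Stable M μ := by
  -- the empty matching is feasible
  have hfe0 : Feasible M (fun _ => (none : Option (C × Option R))) := by
    refine ⟨fun c => ?_, fun r => ?_, fun s c r hh => by simp at hh⟩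
    · simp only [collegeCount]
      have : {s : S | ∃ r, (none : Option (C × Option R)) = some (c, r)} = ∅ := by
        ext s; simp
      simp [this]
    · simp only [resourceCount]
      have : {s : S | ∃ c, (none : Option (C × Option R)) = some (c, some r)} = ∅ := by
        ext s; simp
      simp [this]
  have hfeas : Feasible M μ := sdrun_feasible h hfe0
  -- the state at the turn of each student
  have hturn : ∀ (c : C) (s : S), ∃ μt : Matching S C R, BestChoice M μt s (μ s) ∧
      (∀ t, μt t = μ t ∨ μt t = none) ∧ μt s = none ∧
      (∀ t, pr s t → μt t = none) := by
    intro c s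
    haveI hsto : IsStrictTotalOrder S pr := haligned c ▸ M.prC_sto c
    have hasym : ∀ a b, pr a b → pr b a → False := fun a b h1 h2 =>
      irrefl_of pr a (trans_of pr h1 h2)
    obtain ⟨μt, h1, h2, h3, h4⟩ := sdrun_turn hasym hnd hsorted h (s := s) (hall s)
    exact ⟨μt, h1, h2, h3, fun t ht => h4 t ht (hall t)⟩
  -- individual rationality
  have hIR : IndRational M μ := by
    intro s x hx
    obtain ⟨c, r⟩ := x
    obtain ⟨μt, hbc, -, -, -⟩ := hturn c s
    rw [hx] at hbc
    exact hbc.1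
  -- key contradiction lemma
  have key : ∀ (s : S) (c : C) (r : Option R) (ν : Matching S C R),
      M.prS s (some (c, r)) (μ s) → μ s ≠ some (c, r) → Feasible M ν →
      ν s = some (c, r) → (∀ t, t ≠ s → ν t = μ t ∨ pr s t) → False := by
    intro s c r ν hpref hne hν hνs hother
    obtain ⟨μt, hbc, h2, h3, h4⟩ := hturn c s
    have hsub : Sub (Function.update μt s (some (c, r))) ν := by
      intro t
      by_cases hts : t = s
      · subst hts; left; rw [Function.update_self, hνs]
      · rw [Function.update_of_ne hts]
        rcases h2 t with hμt | hμt
        · rcases hother t hts with he | hp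
          · left; rw [hμt, he]
          · right; exact h4 t hp
        · right; exact hμt
    have hfu : Feasible M (Function.update μt s (some (c, r))) := sub_feasible hsub hν
    have hacc : Acceptable M s c r := by
      cases hμ : μ s with
      | none => rw [hμ] at hpref; exact hpref
      | some y =>
          haveI := M.prS_sto s
          have := hIR s y hμ
          rw [hμ] at hpref
          exact trans_of (M.prS s) hpref this
    cases hμ : μ s with
    | none =>
        rw [hμ] at hbc
        exact hbc c r ⟨hacc, hfu⟩
    | some y =>
        obtain ⟨c', r'⟩ := y
        rw [hμ] at hbc hpref hne
        rcases hbc.2.2 c r hacc hfu with heq | hlt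
        · exact hne (by rw [heq])
        · haveI := M.prS_sto s
          exact irrefl_of (M.prS s) _ (trans_of (M.prS s) hpref hlt)
  refine ⟨hfeas, hIR, ?_, ?_⟩
  · -- envy-free
    rintro s c r ⟨s', r', hne, hμs', hpref, hprC, hfeasU⟩
    have hpr : pr s s' := by rw [← haligned c]; exact hprC
    refine key s c r _ hpref hne hfeasU (Function.update_self _ _ _) ?_
    intro t hts
    by_cases hts' : t = s'
    · subst hts'; right; exact hpr
    · left; rw [Function.update_of_ne hts, Function.update_of_ne hts']
  · -- non-wasteful
    rintro s c r ⟨hne, hpref, hfeasU⟩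
    refine key s c r _ hpref hne hfeasU (Function.update_self _ _ _) ?_
    intro t hts
    left; rw [Function.update_of_ne hts]

end RRC
end
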